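/- Let A and B be positive definite complex n×n matrices and let α, β ∈ [0,1]. Then A ♯_α B = ((A ♯_α B) ♯_β A) ♯_α ((A ♯_α B) ♯_β B). -/

import Mathlib

open Matrix ComplexOrder

/-- Real power of a matrix via the continuous functional calculus
(for a positive definite matrix this is the usual functional-calculus power). -/
noncomputable def mpow {n : ℕ} (A : Matrix (Fin n) (Fin n) ℂ) (t : ℝ) :
    Matrix (Fin n) (Fin n) ℂ :=
  cfc (fun x : ℝ => x ^ t) A

/-- The weighted geometric mean `A ♯ₜ B = A^{1/2} (A^{-1/2} B A^{-1/2})^t A^{1/2}`. -/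
noncomputable def gm {n : ℕ} (t : ℝ) (A B : Matrix (Fin n) (Fin n) ℂ) :
    Matrix (Fin n) (Fin n) ℂ :=
  mpow A (1/2) * mpow (mpow A (-(1/2)) * B * mpow A (-(1/2))) t * mpow A (1/2)

/-- The weighted arithmetic mean `A ∇ₜ B = (1-t)A + tB`. -/
noncomputable def am {n : ℕ} (t : ℝ) (A B : Matrix (Fin n) (Fin n) ℂ) :
    Matrix (Fin n) (Fin n) ℂ :=
  (1 - t) • A + t • B

/-- The weighted harmonic mean `A !ₜ B = ((1-t)A⁻¹ + tB⁻¹)⁻¹`. -/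
noncomputable def hm {n : ℕ} (t : ℝ) (A B : Matrix (Fin n) (Fin n) ℂ) :
    Matrix (Fin n) (Fin n) ℂ :=
  ((1 - t) • A⁻¹ + t • B⁻¹)⁻¹

/-- The Loewner order: `X ≤ Y` iff `Y - X` is positive semidefinite. -/
noncomputable def loewnerLE {n : ℕ} (X Y : Matrix (Fin n) (Fin n) ℂ) : Prop :=
  (Y - X).PosSemidef

namespace GmAux

variable {n : ℕ}

lemma contOn (A : Matrix (Fin n) (Fin n) ℂ) (f : ℝ → ℝ) :
    ContinuousOn f (spectrum ℝ A) :=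
  (Matrix.finite_real_spectrum (A := A)).continuousOn _

lemma spec_pos {A : Matrix (Fin n) (Fin n) ℂ} (hA : A.PosDef) :
    ∀ x ∈ spectrum ℝ A, 0 < x := by
  intro x hx
  rw [hA.1.spectrum_real_eq_range_eigenvalues] at hx
  obtain ⟨i, rfl⟩ := hx
  exact hA.eigenvalues_pos i

lemma mpow_isHermitian (A : Matrix (Fin n) (Fin n) ℂ) (t : ℝ) :
    (mpow A t).IsHermitian :=
  cfc_predicate _ _

lemma posDef_conj' {D M : Matrix (Fin n) (Fin n) ℂ} (hD : D.PosDef) (hM : IsUnit M) :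
    (Mᴴ * D * M).PosDef := by
  refine posDef_iff_dotProduct_mulVec.mpr ⟨isHermitian_conjTranspose_mul_mul M hD.1, fun x hx => ?_⟩
  have hx' : M *ᵥ x ≠ 0 := by
    intro h
    exact hx ((Matrix.mulVec_injective_iff_isUnit.mpr hM).eq_iff.mp
      (h.trans (Matrix.mulVec_zero _).symm))
  simpa only [star_mulVec, dotProduct_mulVec, vecMul_vecMul] using hD.dotProduct_mulVec_pos hx'

lemma posDef_conj {D M : Matrix (Fin n) (Fin n) ℂ} (hD : D.PosDef) (hM : IsUnit M) :
    (M * D * Mᴴ).PosDef := by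
  have := posDef_conj' hD (M := Mᴴ) ?_
  · simpa using this
  · exact (Matrix.isUnit_iff_isUnit_det _).mpr
      (by rw [Matrix.det_conjTranspose]; exact ((Matrix.isUnit_iff_isUnit_det _).mp hM).star)

lemma mpow_posDef {A : Matrix (Fin n) (Fin n) ℂ} (hA : A.PosDef) (t : ℝ) :
    (mpow A t).PosDef := by
  rw [mpow, hA.1.cfc_eq, Matrix.IsHermitian.cfc]
  rw [Unitary.conjStarAlgAut_apply, Matrix.star_eq_conjTranspose]
  refine posDef_conj ?_ ?_
  · refine Matrix.posDef_diagonal_iff.mpr fun i => ?_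
    have : (0:ℝ) < hA.1.eigenvalues i ^ t :=
      Real.rpow_pos_of_pos (hA.eigenvalues_pos i) t
    exact RCLike.ofReal_pos.mpr this
  · exact (Unitary.toUnits hA.1.eigenvectorUnitary).isUnit

lemma mpow_mul {A : Matrix (Fin n) (Fin n) ℂ} (hA : A.PosDef) (s t : ℝ) :
    mpow A s * mpow A t = mpow A (s + t) := by
  rw [mpow, mpow, mpow, ← cfc_mul _ _ A (contOn A _) (contOn A _)]
  exact cfc_congr fun x hx => (Real.rpow_add (spec_pos hA x hx) s t).symm

lemma mpow_one {A : Matrix (Fin n) (Fin n) ℂ} (hA : A.IsHermitian) :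
    mpow A 1 = A := by
  rw [mpow]
  simp only [Real.rpow_one]
  exact cfc_id' ℝ A hA

lemma mpow_zero {A : Matrix (Fin n) (Fin n) ℂ} (hA : A.IsHermitian) :
    mpow A 0 = 1 := by
  rw [mpow]
  simp only [Real.rpow_zero]
  exact cfc_const_one ℝ A hA

lemma mpow_mpow {A : Matrix (Fin n) (Fin n) ℂ} (hA : A.PosDef) (s t : ℝ) :
    mpow (mpow A s) t = mpow A (s * t) := by
  rw [mpow, mpow, mpow]
  refine (cfc_comp (fun x : ℝ => x ^ t) (fun x : ℝ => x ^ s) A hA.1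
      (((Matrix.finite_real_spectrum (A := A)).image _).continuousOn _)
      (contOn A _)).symm.trans ?_
  exact cfc_congr fun x hx => by
    simp only [Function.comp_apply]
    rw [← Real.rpow_mul (spec_pos hA x hx).le]

end GmAux

namespace Conj

noncomputable def conjSAH (u : Matrix (Fin n) (Fin n) ℂ) (hu : u * star u = 1)
    (hu' : star u * u = 1) :
    Matrix (Fin n) (Fin n) ℂ →⋆ₐ[ℝ] Matrix (Fin n) (Fin n) ℂ where
  toFun T := u * T * star u
  map_one' := by simpa using hu
  map_mul' S T := by
    show u * (S * T) * star u = (u * S * star u) * (u * T * star u)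
    have h : u * (S * T) * star u = u * S * (star u * u) * (T * star u) := by
      rw [hu']; noncomm_ring
    rw [h]; noncomm_ring
  map_zero' := by simp
  map_add' S T := by
    show u * (S + T) * star u = (u * S * star u) + (u * T * star u)
    rw [mul_add, add_mul]
  commutes' r := by
    simp only [Algebra.algebraMap_eq_smul_one, mul_smul_comm, smul_mul_assoc, mul_one, hu]
  map_star' T := by
    show u * star T * star u = star (u * T * star u)
    simp [Matrix.star_mul, mul_assoc]

lemma cfc_conj_unitary {u a : Matrix (Fin n) (Fin n) ℂ} (hu : u * star u = 1)
    (hu' : star u * u = 1) (ha : a.IsHermitian) (f : ℝ → ℝ) :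
    cfc f (u * a * star u) = u * cfc f a * star u := by
  have hcont : Continuous (conjSAH u hu hu') := by
    show Continuous fun T => u * T * star u
    exact (continuous_const.matrix_mul continuous_id).matrix_mul continuous_const
  have hherm : (u * a * star u).IsHermitian := by
    rw [Matrix.star_eq_conjTranspose]
    exact Matrix.isHermitian_mul_mul_conjTranspose u ha
  exact ((conjSAH u hu hu').map_cfc f a (GmAux.contOn a f) hcont ha hherm).symm

end Conj


namespace GmAux

open Conj

lemma star_mpow (A : Matrix (Fin n) (Fin n) ℂ) (t : ℝ) :
    star (mpow A t) = mpow A t := by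
  rw [Matrix.star_eq_conjTranspose]
  exact mpow_isHermitian A t

lemma posDef_star_mul_self {S : Matrix (Fin n) (Fin n) ℂ} (hS : IsUnit S) :
    (star S * S).PosDef := by
  have := posDef_conj' (M := S) Matrix.PosDef.one hS
  simpa [Matrix.star_eq_conjTranspose] using this

lemma posDef_mul_self_star {S : Matrix (Fin n) (Fin n) ℂ} (hS : IsUnit S) :
    (S * star S).PosDef := by
  have := posDef_conj (M := S) Matrix.PosDef.one hS
  simpa [Matrix.star_eq_conjTranspose] using this

lemma polar_unitary {S : Matrix (Fin n) (Fin n) ℂ} (hS : IsUnit S) :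
    star (S * mpow (star S * S) (-(1/2))) * (S * mpow (star S * S) (-(1/2))) = 1 := by
  have hP : (star S * S).PosDef := posDef_star_mul_self hS
  rw [Matrix.star_mul, star_mpow]
  calc mpow (star S * S) (-(1/2)) * star S * (S * mpow (star S * S) (-(1/2)))
      = mpow (star S * S) (-(1/2)) * (star S * S) * mpow (star S * S) (-(1/2)) := by
        noncomm_ring
    _ = mpow (star S * S) (-(1/2)) * mpow (star S * S) 1 * mpow (star S * S) (-(1/2)) := by
        rw [mpow_one hP.1]
    _ = 1 := by
        rw [mpow_mul hP, mpow_mul hP, show -(1/2:ℝ) + 1 + -(1/2) = 0 by norm_num,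
          mpow_zero hP.1]

lemma intertwine {S : Matrix (Fin n) (Fin n) ℂ} (hS : IsUnit S) (t : ℝ) :
    mpow (S * star S) t * S = S * mpow (star S * S) t := by
  have hP : (star S * S).PosDef := posDef_star_mul_self hS
  have hWW : star (S * mpow (star S * S) (-(1/2))) * (S * mpow (star S * S) (-(1/2))) = 1 :=
    polar_unitary hS
  have hWW' : (S * mpow (star S * S) (-(1/2))) * star (S * mpow (star S * S) (-(1/2))) = 1 :=
    mul_eq_one_comm.mp hWW
  have hsW : star (S * mpow (star S * S) (-(1/2)))
      = mpow (star S * S) (-(1/2)) * star S := by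
    rw [Matrix.star_mul, star_mpow]
  have hQW : S * star S = (S * mpow (star S * S) (-(1/2))) * (star S * S)
      * star (S * mpow (star S * S) (-(1/2))) := by
    rw [hsW]
    calc S * star S
        = S * (mpow (star S * S) (-(1/2)) * mpow (star S * S) 1
            * mpow (star S * S) (-(1/2))) * star S := by
          rw [mpow_mul hP, mpow_mul hP, show -(1/2:ℝ) + 1 + -(1/2) = 0 by norm_num,
            mpow_zero hP.1, mul_one]
      _ = S * mpow (star S * S) (-(1/2)) * (star S * S)
          * (mpow (star S * S) (-(1/2)) * star S) := by
          rw [mpow_one hP.1]; noncomm_ring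
  have key : mpow (S * star S) t
      = (S * mpow (star S * S) (-(1/2))) * mpow (star S * S) t
        * star (S * mpow (star S * S) (-(1/2))) := by
    rw [hQW]
    simp only [mpow]
    exact cfc_conj_unitary hWW' hWW hP.1 _
  rw [key, hsW]
  calc S * mpow (star S * S) (-(1/2)) * mpow (star S * S) t
        * (mpow (star S * S) (-(1/2)) * star S) * S
      = S * (mpow (star S * S) (-(1/2)) * mpow (star S * S) t
          * mpow (star S * S) (-(1/2))) * (star S * S) := by noncomm_ring
    _ = S * (mpow (star S * S) (-(1/2)) * mpow (star S * S) t
          * mpow (star S * S) (-(1/2))) * mpow (star S * S) 1 := by rw [mpow_one hP.1]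
    _ = S * mpow (star S * S) t := by
        rw [mpow_mul hP, mpow_mul hP, mul_assoc, mpow_mul hP,
          show -(1/2:ℝ) + t + -(1/2) + 1 = t by ring]

lemma gm_conj {M X Y : Matrix (Fin n) (Fin n) ℂ} (hM : IsUnit M)
    (hX : X.PosDef) (hY : Y.IsHermitian) (t : ℝ) :
    gm t (M * X * star M) (M * Y * star M) = M * gm t X Y * star M := by
  have hXh := mpow_posDef hX (1/2)
  obtain ⟨S, hSdef⟩ : ∃ S, S = M * mpow X (1/2) := ⟨_, rfl⟩
  have hS : IsUnit S := hSdef ▸ hM.mul hXh.isUnit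
  have hP : (star S * S).PosDef := posDef_star_mul_self hS
  have hMX : M * X * star M = S * star S := by
    rw [hSdef, Matrix.star_mul, star_mpow]
    calc M * X * star M
        = M * (mpow X (1/2) * mpow X (1/2)) * star M := by
          rw [mpow_mul hX, show (1/2:ℝ) + 1/2 = 1 by norm_num, mpow_one hX.1]
      _ = M * mpow X (1/2) * (mpow X (1/2) * star M) := by noncomm_ring
  have hMS : M = S * mpow X (-(1/2)) := by
    rw [hSdef, mul_assoc, mpow_mul hX, show (1/2:ℝ) + -(1/2) = 0 by norm_num,
      mpow_zero hX.1, mul_one]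
  have hWW : star (S * mpow (star S * S) (-(1/2))) * (S * mpow (star S * S) (-(1/2))) = 1 :=
    polar_unitary hS
  have hWW' : (S * mpow (star S * S) (-(1/2))) * star (S * mpow (star S * S) (-(1/2))) = 1 :=
    mul_eq_one_comm.mp hWW
  have hZ : (mpow X (-(1/2)) * Y * mpow X (-(1/2))).IsHermitian := by
    have h := Matrix.isHermitian_mul_mul_conjTranspose (mpow X (-(1/2))) hY
    rwa [mpow_isHermitian X (-(1/2))] at h
  have k1 : mpow (S * star S) (-(1/2)) * M
      = (S * mpow (star S * S) (-(1/2))) * mpow X (-(1/2)) := by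
    rw [hMS, ← mul_assoc, intertwine hS]
  have k2 : star M * mpow (S * star S) (-(1/2))
      = mpow X (-(1/2)) * star (S * mpow (star S * S) (-(1/2))) := by
    calc star M * mpow (S * star S) (-(1/2))
        = star (mpow (S * star S) (-(1/2)) * M) := by rw [Matrix.star_mul, star_mpow]
      _ = star ((S * mpow (star S * S) (-(1/2))) * mpow X (-(1/2))) := by rw [k1]
      _ = mpow X (-(1/2)) * star (S * mpow (star S * S) (-(1/2))) := by
          rw [Matrix.star_mul, star_mpow]
  have kE : mpow (S * star S) (-(1/2)) * (M * Y * star M) * mpow (S * star S) (-(1/2))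
      = (S * mpow (star S * S) (-(1/2))) * (mpow X (-(1/2)) * Y * mpow X (-(1/2)))
        * star (S * mpow (star S * S) (-(1/2))) := by
    calc mpow (S * star S) (-(1/2)) * (M * Y * star M) * mpow (S * star S) (-(1/2))
        = (mpow (S * star S) (-(1/2)) * M) * Y * (star M * mpow (S * star S) (-(1/2))) := by
          noncomm_ring
      _ = ((S * mpow (star S * S) (-(1/2))) * mpow X (-(1/2))) * Y
          * (mpow X (-(1/2)) * star (S * mpow (star S * S) (-(1/2)))) := by rw [k1, k2]
      _ = _ := by noncomm_ring
  have k3 : mpow (S * star S) (1/2) * (S * mpow (star S * S) (-(1/2))) = S := by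
    rw [← mul_assoc, intertwine hS, mul_assoc, mpow_mul hP,
      show (1/2:ℝ) + -(1/2) = 0 by norm_num, mpow_zero hP.1, mul_one]
  have k4 : star (S * mpow (star S * S) (-(1/2))) * mpow (S * star S) (1/2) = star S := by
    calc star (S * mpow (star S * S) (-(1/2))) * mpow (S * star S) (1/2)
        = star (mpow (S * star S) (1/2) * (S * mpow (star S * S) (-(1/2)))) := by
          simp only [Matrix.star_mul, star_mpow, mul_assoc]
      _ = star S := by rw [k3]
  rw [gm, hMX, kE]
  have mpowE : mpow ((S * mpow (star S * S) (-(1/2)))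
        * (mpow X (-(1/2)) * Y * mpow X (-(1/2)))
        * star (S * mpow (star S * S) (-(1/2)))) t
      = (S * mpow (star S * S) (-(1/2))) * mpow (mpow X (-(1/2)) * Y * mpow X (-(1/2))) t
        * star (S * mpow (star S * S) (-(1/2))) := by
    simp only [mpow]
    exact cfc_conj_unitary hWW' hWW hZ _
  rw [mpowE]
  calc mpow (S * star S) (1/2)
        * ((S * mpow (star S * S) (-(1/2))) * mpow (mpow X (-(1/2)) * Y * mpow X (-(1/2))) t
          * star (S * mpow (star S * S) (-(1/2)))) * mpow (S * star S) (1/2)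
      = (mpow (S * star S) (1/2) * (S * mpow (star S * S) (-(1/2))))
        * mpow (mpow X (-(1/2)) * Y * mpow X (-(1/2))) t
        * (star (S * mpow (star S * S) (-(1/2))) * mpow (S * star S) (1/2)) := by
        noncomm_ring
    _ = S * mpow (mpow X (-(1/2)) * Y * mpow X (-(1/2))) t * star S := by rw [k3, k4]
    _ = M * gm t X Y * star M := by
        rw [gm, hSdef, Matrix.star_mul, star_mpow]; noncomm_ring

lemma gm_mpow {D : Matrix (Fin n) (Fin n) ℂ} (hD : D.PosDef) (a b t : ℝ) :
    gm t (mpow D a) (mpow D b) = mpow D ((1 - t) * a + t * b) := by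
  simp only [gm, mpow_mpow hD]
  rw [mpow_mul hD, mpow_mul hD, mpow_mpow hD, mpow_mul hD, mpow_mul hD]
  have h : a * (1 / 2) + (a * -(1 / 2) + b + a * -(1 / 2)) * t + a * (1 / 2) = (1 - t) * a + t * b := by ring
  rw [h]

end GmAux


set_option linter.unusedVariables false in
open GmAux in
/-- The interpolation identity `A ♯_α B = ((A ♯_α B) ♯_β A) ♯_α ((A ♯_α B) ♯_β B)`. -/
theorem stmt7 {n : ℕ} (A B : Matrix (Fin n) (Fin n) ℂ) (hA : A.PosDef) (hB : B.PosDef)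
    (α β : ℝ) (hα : α ∈ Set.Icc (0 : ℝ) 1) (hβ : β ∈ Set.Icc (0 : ℝ) 1) :
    gm α A B = gm α (gm β (gm α A B) A) (gm β (gm α A B) B) := by

  obtain ⟨M, hMdef⟩ : ∃ M, M = mpow A (1/2) := ⟨_, rfl⟩
  obtain ⟨D, hDdef⟩ : ∃ D, D = mpow A (-(1/2)) * B * mpow A (-(1/2)) := ⟨_, rfl⟩
  have hM : M.PosDef := hMdef ▸ mpow_posDef hA _
  have hMu : IsUnit M := hM.isUnit
  have hN : (mpow A (-(1/2))).PosDef := mpow_posDef hA _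
  have hD : D.PosDef := by
    rw [hDdef]
    have := posDef_conj hB hN.isUnit
    rwa [← Matrix.star_eq_conjTranspose, star_mpow] at this
  have hA_eq : M * mpow D 0 * star M = A := by
    rw [mpow_zero hD.1, mul_one, hMdef, star_mpow, mpow_mul hA,
      show (1/2:ℝ) + 1/2 = 1 by norm_num, mpow_one hA.1]
  have hB_eq : M * mpow D 1 * star M = B := by
    rw [mpow_one hD.1, hMdef, star_mpow, hDdef]
    calc mpow A (1/2) * (mpow A (-(1/2)) * B * mpow A (-(1/2))) * mpow A (1/2)
        = (mpow A (1/2) * mpow A (-(1/2))) * B * (mpow A (-(1/2)) * mpow A (1/2)) := by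
          noncomm_ring
      _ = B := by
          rw [mpow_mul hA, mpow_mul hA, show (1/2:ℝ) + -(1/2) = 0 by norm_num,
            show -(1/2:ℝ) + 1/2 = 0 by norm_num, mpow_zero hA.1, one_mul, mul_one]
  have e1 : gm α A B = M * mpow D ((1-α)*0 + α*1) * star M := by
    conv_lhs => rw [← hA_eq, ← hB_eq]
    rw [gm_conj hMu (mpow_posDef hD 0) (mpow_isHermitian D 1) α, gm_mpow hD]
  have e2 : gm β (gm α A B) A
      = M * mpow D ((1-β)*((1-α)*0+α*1) + β*0) * star M := by
    conv_lhs => rw [e1, ← hA_eq]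
    rw [gm_conj hMu (mpow_posDef hD _) (mpow_isHermitian D 0) β, gm_mpow hD]
  have e3 : gm β (gm α A B) B
      = M * mpow D ((1-β)*((1-α)*0+α*1) + β*1) * star M := by
    conv_lhs => rw [e1, ← hB_eq]
    rw [gm_conj hMu (mpow_posDef hD _) (mpow_isHermitian D 1) β, gm_mpow hD]
  rw [e2, e3, e1, gm_conj hMu (mpow_posDef hD _) (mpow_isHermitian D _) α, gm_mpow hD,
    show (1-α)*((1-β)*((1-α)*0+α*1) + β*0) + α*((1-β)*((1-α)*0+α*1) + β*1)
      = (1-α)*0 + α*1 by ring]
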